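/- The Wiener index of the third Sierpi\'nski carpet graph $\Gamma_3$ equals 31264. -/

import Mathlib

/-- ℓ¹ distance on ℤ². -/
def l1 (u v : ℤ × ℤ) : ℕ := (u.1 - v.1).natAbs + (u.2 - v.2).natAbs

/-- The grid graph on ℤ². -/
def gridGraph : SimpleGraph (ℤ × ℤ) where
  Adj u v := l1 u v = 1
  symm := by constructor; intro u v h; unfold l1 at *; omega
  loopless := by constructor; intro u h; unfold l1 at h; omega

/-- A lattice point is a vertex of the level-`n` discrete Sierpiński carpet. -/
def carpetVertex (n : ℕ) (p : ℤ × ℤ) : Prop :=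
  0 ≤ p.1 ∧ p.1 ≤ 3 ^ (n - 1) ∧ 0 ≤ p.2 ∧ p.2 ≤ 3 ^ (n - 1) ∧
  ∀ s < n - 1, ¬ ((3:ℤ)^s < p.1 % 3^(s+1) ∧ p.1 % 3^(s+1) < 2*3^s ∧
      (3:ℤ)^s < p.2 % 3^(s+1) ∧ p.2 % 3^(s+1) < 2*3^s)

instance (n : ℕ) : DecidablePred (carpetVertex n) := fun p => by
  unfold carpetVertex; infer_instance

/-- The level-`n` Sierpiński carpet graph, as a graph on ℤ². -/
def carpetGraph (n : ℕ) : SimpleGraph (ℤ × ℤ) where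
  Adj u v := carpetVertex n u ∧ carpetVertex n v ∧ l1 u v = 1
  symm := by constructor; rintro u v ⟨h1, h2, h3⟩; exact ⟨h2, h1, by unfold l1 at *; omega⟩
  loopless := by constructor; rintro u ⟨-, -, h⟩; unfold l1 at h; omega

/-- The vertex set of the level-`n` carpet graph. -/
noncomputable def carpetVerts (n : ℕ) : Finset (ℤ × ℤ) :=
  ((Finset.Icc (0:ℤ) (3^(n-1))) ×ˢ (Finset.Icc (0:ℤ) (3^(n-1)))).filter (carpetVertex n)

/-- Certified distance function: ℓ¹ distance plus a detour of 2 around the central hole. -/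
def d3 (u v : ℤ × ℤ) : ℕ :=
  l1 u v +
    (if (4 ≤ u.1 ∧ u.1 ≤ 5 ∧ 4 ≤ v.1 ∧ v.1 ≤ 5 ∧ (u.2 ≤ 3 ∧ 6 ≤ v.2 ∨ v.2 ≤ 3 ∧ 6 ≤ u.2)) ∨
        (4 ≤ u.2 ∧ u.2 ≤ 5 ∧ 4 ≤ v.2 ∧ v.2 ≤ 5 ∧ (u.1 ≤ 3 ∧ 6 ≤ v.1 ∨ v.1 ≤ 3 ∧ 6 ≤ u.1))
     then 2 else 0)

instance (n : ℕ) : DecidableRel (carpetGraph n).Adj := fun u v =>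
  decidable_of_iff (carpetVertex n u ∧ carpetVertex n v ∧ l1 u v = 1) Iff.rfl

/-- The four lattice neighbours of a point. -/
def nbrs (v : ℤ × ℤ) : List (ℤ × ℤ) := [(v.1+1,v.2),(v.1-1,v.2),(v.1,v.2+1),(v.1,v.2-1)]

lemma mem_nbrs_of_l1 {v w : ℤ × ℤ} (h : l1 v w = 1) : w ∈ nbrs v := by
  unfold l1 at h
  simp only [nbrs, List.mem_cons, List.mem_singleton, Prod.ext_iff]
  omega

lemma d3_self (u : ℤ × ℤ) : d3 u u = 0 := by
  unfold d3 l1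
  rw [if_neg]
  · omega
  · rintro (⟨_, _, _, _, h⟩ | ⟨_, _, _, _, h⟩) <;> omega

lemma carpet_closure : ∀ a b, (carpetGraph 3).Adj a b → a ∈ carpetVerts 3 → b ∈ carpetVerts 3 := by
  rintro a b ⟨-, hb, -⟩ -
  have h := hb
  obtain ⟨h1, h2, h3, h4, -⟩ := h
  simp only [carpetVerts, Finset.mem_filter, Finset.mem_product, Finset.mem_Icc]
  exact ⟨⟨⟨h1, h2⟩, h3, h4⟩, hb⟩

/-- A BFS-style certificate: if `d u ·` vanishes at `u`, drops by exactly 1 along some edge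
into every other vertex, and increases by at most 1 along every edge, then `d u ·` is the
graph distance from `u` on the (adjacency-closed) vertex set `S`. -/
lemma dist_eq_of_cert {V : Type*} (G : SimpleGraph V) (S : Finset V)
    (hS : ∀ a b, G.Adj a b → a ∈ S → b ∈ S)
    (d : V → V → ℕ) (u : V) (hu : u ∈ S)
    (hd0 : d u u = 0)
    (hstep : ∀ v ∈ S, ∀ w ∈ S, G.Adj v w → d u v ≤ d u w + 1)
    (hup : ∀ v ∈ S, v ≠ u → ∃ w ∈ S, G.Adj w v ∧ d u w + 1 = d u v) :
    ∀ v ∈ S, G.dist u v = d u v := by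
  have upper : ∀ n, ∀ v ∈ S, d u v = n → G.Reachable u v ∧ G.dist u v ≤ d u v := by
    intro n
    induction n using Nat.strong_induction_on with
    | _ n ih =>
      intro v hv hn
      by_cases hvu : v = u
      · subst hvu; exact ⟨SimpleGraph.Reachable.refl _, by simp [hd0]⟩
      · obtain ⟨w, hwS, hadj, hdw⟩ := hup v hv hvu
        have hlt : d u w < n := by omega
        obtain ⟨hr, hd⟩ := ih _ hlt w hwS rfl
        obtain ⟨p, hp⟩ := hr.exists_walk_length_eq_dist
        refine ⟨hr.trans hadj.toWalk.reachable, ?_⟩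
        calc G.dist u v ≤ (p.concat hadj).length := G.dist_le _
          _ = p.length + 1 := SimpleGraph.Walk.length_concat _ _
          _ = G.dist u w + 1 := by rw [hp]
          _ ≤ d u w + 1 := by omega
          _ = d u v := hdw
  have lower : ∀ (a b : V) (p : G.Walk a b), a ∈ S → d u a ≤ d u b + p.length := by
    intro a b p
    induction p with
    | nil => intro _; simp
    | cons h q ih =>
      intro haS
      have hbS := hS _ _ h haS
      have h1 := ih hbS
      have h2 := hstep _ haS _ hbS h
      simp only [SimpleGraph.Walk.length_cons]
      omega
  intro v hv
  obtain ⟨hr, hup'⟩ := upper (d u v) v hv rfl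
  obtain ⟨p, hp⟩ := hr.symm.exists_walk_length_eq_dist
  have := lower v u p hv
  rw [hd0] at this
  rw [G.dist_comm] at hp
  omega

set_option maxRecDepth 100000 in
set_option maxHeartbeats 8000000 in
lemma cert_step : ∀ u ∈ carpetVerts 3, ∀ v ∈ carpetVerts 3, ∀ w ∈ nbrs v,
    carpetVertex 3 w → d3 u v ≤ d3 u w + 1 := by decide

set_option maxRecDepth 100000 in
set_option maxHeartbeats 8000000 in
lemma cert_up : ∀ u ∈ carpetVerts 3, ∀ v ∈ carpetVerts 3, v ≠ u →
    ∃ w ∈ nbrs v, (carpetGraph 3).Adj w v ∧ d3 u w + 1 = d3 u v := by decide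

lemma dist_eq_d3 : ∀ u ∈ carpetVerts 3, ∀ v ∈ carpetVerts 3,
    (carpetGraph 3).dist u v = d3 u v := by
  intro u hu
  refine dist_eq_of_cert (carpetGraph 3) (carpetVerts 3) carpet_closure d3 u hu (d3_self u) ?_ ?_
  · intro v hv w hw hadj
    exact cert_step u hu v hv w (mem_nbrs_of_l1 hadj.2.2) hadj.2.1
  · intro v hv hvu
    obtain ⟨w, hwn, hadj, hd⟩ := cert_up u hu v hv hvu
    exact ⟨w, carpet_closure v w hadj.symm hv, hadj, hd⟩

set_option maxRecDepth 100000 in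
set_option maxHeartbeats 8000000 in
lemma sum_d3 : (∑ u ∈ carpetVerts 3, ∑ v ∈ carpetVerts 3, d3 u v) / 2 = 31264 := by decide

/-- The Wiener index of the level-3 Sierpiński carpet graph equals 31264. -/
theorem wiener_index_carpet_three :
    (∑ u ∈ carpetVerts 3, ∑ v ∈ carpetVerts 3, (carpetGraph 3).dist u v) / 2 = 31264 := by
  rw [show (∑ u ∈ carpetVerts 3, ∑ v ∈ carpetVerts 3, (carpetGraph 3).dist u v)
      = ∑ u ∈ carpetVerts 3, ∑ v ∈ carpetVerts 3, d3 u v from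
    Finset.sum_congr rfl fun u hu => Finset.sum_congr rfl fun v hv => dist_eq_d3 u hu v hv]
  exact sum_d3
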